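/- Let R be a commutative ring and let A, B, C, D be n×n matrices over R such that B·D = D·B. Then the determinant of the 2n×2n block matrix with blocks (A, B; C, D) equals det(D·A - B·C). -/

import Mathlib

open Polynomial Matrix

theorem stmt_5 {R : Type*} [CommRing R] {n : ℕ}
    (A B C D : Matrix (Fin n) (Fin n) R) (hBD : B * D = D * B) :
    (Matrix.fromBlocks A B C D).det = (D * A - B * C).det := by
  classical
  -- Work over R[X]
  set φ : R →+* R[X] := Polynomial.C with hφ
  set At := A.map φ
  set Bt := B.map φ
  set Ct := C.map φ
  set Dt : Matrix (Fin n) (Fin n) R[X] := Matrix.charmatrix (-D) with hDt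
  have hDt' : Dt = (Polynomial.X : R[X]) • (1 : Matrix (Fin n) (Fin n) R[X]) + D.map φ := by
    rw [hDt]
    ext i j
    by_cases h : i = j <;>
      simp [h, charmatrix_apply_eq, charmatrix_apply_ne, Matrix.one_apply, sub_neg_eq_add, hφ]
  have hcomm : Bt * Dt = Dt * Bt := by
    rw [hDt', Matrix.mul_add, Matrix.add_mul, Matrix.mul_smul, Matrix.smul_mul,
      Matrix.mul_one, Matrix.one_mul]
    congr 1
    rw [← Matrix.map_mul, ← Matrix.map_mul, hBD]
  have key : (fromBlocks Dt (-Bt) 0 1) * (fromBlocks At Bt Ct Dt)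
      = fromBlocks (Dt * At - Bt * Ct) 0 Ct Dt := by
    rw [Matrix.fromBlocks_multiply]
    congr 1 <;> simp [hcomm, Matrix.neg_mul, sub_eq_add_neg]
  have hdet : Dt.det * (fromBlocks At Bt Ct Dt).det
      = (Dt * At - Bt * Ct).det * Dt.det := by
    have := congrArg Matrix.det key
    rwa [Matrix.det_mul, Matrix.det_fromBlocks_zero₂₁, Matrix.det_fromBlocks_zero₁₂,
      Matrix.det_one, mul_one] at this
  have hmonic : Dt.det.Monic := Matrix.charpoly_monic (-D)
  have hcancel : (fromBlocks At Bt Ct Dt).det = (Dt * At - Bt * Ct).det := by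
    apply hmonic.isRegular.left
    show Dt.det * _ = Dt.det * _
    rw [hdet, mul_comm]
  -- evaluate at 0
  set ψ : R[X] →+* R := Polynomial.evalRingHom 0 with hψ
  have hmap : ∀ M : Matrix (Fin n) (Fin n) R, (M.map φ).map ψ = M := by
    intro M; ext i j; simp [hφ, hψ]
  have hDmap : Dt.map ψ = D := by
    rw [hDt']
    ext i j
    by_cases h : i = j <;> simp [h, Matrix.one_apply, hφ, hψ, Matrix.add_apply,
      Matrix.smul_apply]
  have h2 : (Dt * At - Bt * Ct).map ψ = D * A - B * C := by
    show ψ.mapMatrix (Dt * At - Bt * Ct) = _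
    rw [map_sub, _root_.map_mul, _root_.map_mul]
    simp only [RingHom.mapMatrix_apply, hmap, hDmap]
    rw [show At.map ψ = A from hmap A, show Bt.map ψ = B from hmap B, show Ct.map ψ = C from hmap C]
  have hfinal := congrArg ψ hcancel
  rw [ψ.map_det, ψ.map_det, RingHom.mapMatrix_apply, RingHom.mapMatrix_apply,
    Matrix.fromBlocks_map, hmap, hmap, hmap, hDmap, h2] at hfinal
  exact hfinal
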